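/- Let q be a power of a prime p, and let a ∈ F_{q^2}^* with a^{q+1} = 1 and a ≠ 1, and let c ∈ F_{q^2} with c ≠ 0 and c^q + c = 0. Let H = {(x, y) ∈ F_{q^2} × F_{q^2} : y^q + y = x^{q+1}} and let Ω = {(0, y) ∈ H} = {(0, y) : y^q + y = 0} (a set of q points). Then the map ψ(x, y) = (a x, y + c) is a bijection of H onto itself of order p · ord(a), where ord(a) is the multiplicative order of a; every point of Ω has ψ-orbit of cardinality exactly p, giving q/p short orbits; and every point of H with x ≠ 0 has ψ-orbit of cardinality exactly p · ord(a). -/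

import Mathlib

/-- The orbit of a point `P` under a bijection `f`, i.e. `{f^k(P) : k ∈ ℤ}`
(for an injective `f`, `Q` lies in the orbit of `P` iff some forward iterates agree). -/
def fnOrbit {α : Type*} (f : α → α) (P : α) : Set α :=
  {Q | ∃ j k : ℕ, f^[j] P = f^[k] Q}

/-- `f` has order exactly `n`: `f^[n] = id` and `n` is minimal positive such. -/
def IsOrderOf {α : Type*} (f : α → α) (n : ℕ) : Prop :=
  f^[n] = id ∧ ∀ k : ℕ, 0 < k → f^[k] = id → n ≤ k

lemma mem_fnOrbit_self {α : Type*} (f : α → α) (P : α) : P ∈ fnOrbit f P := ⟨0, 0, rfl⟩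

lemma fnOrbit_symm {α : Type*} (f : α → α) {P Q : α} (h : Q ∈ fnOrbit f P) :
    P ∈ fnOrbit f Q := by
  obtain ⟨j, k, h⟩ := h
  exact ⟨k, j, h.symm⟩

lemma fnOrbit_trans {α : Type*} (f : α → α) {P Q R : α}
    (h1 : Q ∈ fnOrbit f P) (h2 : R ∈ fnOrbit f Q) : R ∈ fnOrbit f P := by
  obtain ⟨j, k, h1⟩ := h1
  obtain ⟨j', k', h2⟩ := h2
  refine ⟨j' + j, k + k', ?_⟩
  rw [Function.iterate_add_apply, h1, Function.iterate_add_apply,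
    ← Function.iterate_add_apply, Nat.add_comm j' k, Function.iterate_add_apply, h2,
    ← Function.iterate_add_apply]

lemma fnOrbit_eq_of_mem {α : Type*} (f : α → α) {P Q : α} (h : Q ∈ fnOrbit f P) :
    fnOrbit f Q = fnOrbit f P := by
  ext R
  exact ⟨fun hR => fnOrbit_trans f h hR, fun hR => fnOrbit_trans f (fnOrbit_symm f h) hR⟩

lemma fnOrbit_eq_image {α : Type*} (f : α → α) (N d : ℕ) (hN : 0 < N)
    (hfN : f^[N] = id) (P : α) (hd : 0 < d)
    (hP : ∀ k, f^[k] P = P ↔ d ∣ k) :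
    fnOrbit f P = (fun m => f^[m] P) '' Set.Iio d := by
  have hdvd : ∀ t, f^[d * t] P = P := fun t => (hP (d * t)).mpr ⟨t, rfl⟩
  have hmod : ∀ m, f^[m] P = f^[m % d] P := by
    intro m
    conv_lhs => rw [← Nat.mod_add_div m d, Function.iterate_add_apply, hdvd]
  ext Q
  constructor
  · rintro ⟨j, k, h⟩
    have hQ : Q = f^[(N - 1) * k + j] P := by
      have h1 : f^[(N - 1) * k + k] Q = Q := by
        have : (N - 1) * k + k = N * k := by
          cases N with
          | zero => omega
          | succ n => simp [Nat.succ_sub_one, Nat.succ_mul]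
        rw [this, Function.iterate_mul, hfN, Function.iterate_id, id]
      rw [← h1, Function.iterate_add_apply, ← h, ← Function.iterate_add_apply]
    refine ⟨((N - 1) * k + j) % d, Nat.mod_lt _ hd, ?_⟩
    show f^[((N - 1) * k + j) % d] P = Q
    rw [← hmod]; exact hQ.symm
  · rintro ⟨m, _, rfl⟩
    exact ⟨m, 0, rfl⟩

lemma fnOrbit_ncard {α : Type*} (f : α → α) (hf : Function.Injective f) (N d : ℕ)
    (hN : 0 < N) (hfN : f^[N] = id) (P : α) (hd : 0 < d)
    (hP : ∀ k, f^[k] P = P ↔ d ∣ k) :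
    (fnOrbit f P).ncard = d := by
  have hinj : Set.InjOn (fun m => f^[m] P) (Set.Iio d) := by
    have key : ∀ m m', m ≤ m' → m' < d → f^[m] P = f^[m'] P → m = m' := by
      intro m m' hle hlt h
      have h2 : f^[m] (f^[m' - m] P) = f^[m] P := by
        rw [← Function.iterate_add_apply, Nat.add_sub_cancel' hle, ← h]
      have h3 : f^[m' - m] P = P := (hf.iterate m) h2
      have h4 : d ∣ m' - m := (hP _).mp h3
      rcases Nat.eq_zero_or_pos (m' - m) with h5 | h5
      · omega
      · have := Nat.le_of_dvd h5 h4; omega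
    intro m hm m' hm' h
    simp only [Set.mem_Iio] at hm hm'
    rcases le_total m m' with hle | hle
    · exact key m m' hle hm' h
    · exact (key m' m hle hm h.symm).symm
  rw [fnOrbit_eq_image f N d hN hfN P hd hP, Set.ncard_image_of_injOn hinj]
  rw [← Finset.coe_Iio, Set.ncard_coe_finset, Nat.card_Iio]

open Polynomial in
lemma aux_roots_le {F : Type*} [Field F] [Fintype F] (q : ℕ) (hq : 1 < q) (b : F) :
    {y : F | y ^ q + b * y = 0}.ncard ≤ q := by
  classical
  set f : F[X] := X ^ q + C b * X with hf
  have hfne : f ≠ 0 := by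
    intro h0
    have : f.coeff q = 1 := by
      simp [hf, coeff_X, coeff_X_pow]
      exact fun h => absurd h (by omega)
    rw [h0] at this
    simp at this
  have hdeg : f.natDegree ≤ q := by
    refine le_trans (natDegree_add_le _ _) ?_
    simp only [natDegree_X_pow, max_le_iff, le_refl, true_and]
    exact le_trans (natDegree_C_mul_le _ _) (by simpa using hq.le)
  have hsub : {y : F | y ^ q + b * y = 0} ⊆ ↑f.roots.toFinset := by
    intro y hy
    simp only [Multiset.mem_toFinset, Finset.coe_sort_coe, Finset.mem_coe, mem_roots hfne]
    simpa [hf] using hy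
  calc {y : F | y ^ q + b * y = 0}.ncard ≤ (↑f.roots.toFinset : Set F).ncard :=
        Set.ncard_le_ncard hsub (Set.toFinite _)
    _ = f.roots.toFinset.card := Set.ncard_coe_finset _
    _ ≤ Multiset.card f.roots := f.roots.toFinset_card_le
    _ ≤ f.natDegree := f.card_roots'
    _ ≤ q := hdeg

lemma ker_card (q : ℕ) (hq1 : 1 < q)
    {F : Type*} [Field F] [Fintype F] (hF : Fintype.card F = q ^ 2)
    (frob : ∀ x y : F, (x + y) ^ q = x ^ q + y ^ q) :
    {y : F | y ^ q + y = 0}.ncard = q := by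
  classical
  set φ : F →+ F := AddMonoidHom.mk' (fun y => y ^ q + y) (fun x y => by beta_reduce; rw [frob]; ring)
    with hφ
  have hker : (φ.ker : Set F) = {y : F | y ^ q + y = 0} := by
    ext y; simp [hφ, AddMonoidHom.mem_ker, AddMonoidHom.mk'_apply]
  have hcard : Fintype.card F = Nat.card (F ⧸ φ.ker) * Nat.card φ.ker := by
    rw [← Nat.card_eq_fintype_card]
    exact AddSubgroup.card_eq_card_quotient_mul_card_addSubgroup φ.ker
  have hquot : Nat.card (F ⧸ φ.ker) = Nat.card φ.range :=
    Nat.card_congr (QuotientAddGroup.quotientKerEquivRange φ).toEquiv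
  have hrange_le : Nat.card φ.range ≤ q := by
    have hsub : (φ.range : Set F) ⊆ {z : F | z ^ q + (-1) * z = 0} := by
      rintro z ⟨y, rfl⟩
      have hy2 : y ^ (q ^ 2) = y := by rw [← hF]; exact FiniteField.pow_card y
      have : (φ y) ^ q = φ y := by
        simp only [hφ, AddMonoidHom.mk'_apply]
        rw [frob, ← pow_mul, ← pow_two, hy2]
        ring
      simp only [Set.mem_setOf_eq, this]
      ring
    calc Nat.card φ.range = (φ.range : Set F).ncard := by
          rw [← Nat.card_coe_set_eq]; rfl
      _ ≤ {z : F | z ^ q + (-1) * z = 0}.ncard :=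
          Set.ncard_le_ncard hsub (Set.toFinite _)
      _ ≤ q := aux_roots_le q hq1 _
  have hker_le : Nat.card φ.ker ≤ q := by
    calc Nat.card φ.ker = (φ.ker : Set F).ncard := by
          rw [← Nat.card_coe_set_eq]; rfl
      _ ≤ q := by
          rw [hker]
          have := aux_roots_le q hq1 (1 : F)
          simpa using this
  have heq : q ^ 2 = Nat.card (F ⧸ φ.ker) * Nat.card φ.ker := by rw [← hF, hcard]
  have hkq : Nat.card φ.ker = q := by
    rw [hquot] at heq
    nlinarith [Nat.card_pos (α := φ.ker), Nat.card_pos (α := φ.range)]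
  rw [← hker, ← hkq, ← Nat.card_coe_set_eq]; rfl

theorem stmt15 (p nn q : ℕ) (hp : p.Prime) (hq : q = p ^ nn) (hn : 1 ≤ nn)
    {F : Type*} [Field F] [Fintype F] (hF : Fintype.card F = q ^ 2)
    (a : F) (ha0 : a ≠ 0) (haq : a ^ (q + 1) = 1) (ha1 : a ≠ 1)
    (c : F) (hc0 : c ≠ 0) (hc : c ^ q + c = 0)
    (H : Set (F × F)) (hH : H = {P : F × F | P.2 ^ q + P.2 = P.1 ^ (q + 1)})
    (Ω : Set (F × F)) (hΩ : Ω = {P : F × F | P.1 = 0 ∧ P.2 ^ q + P.2 = 0})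
    (ψ : F × F → F × F) (hψ : ψ = fun P => (a * P.1, P.2 + c)) :
    Ω.ncard = q ∧
    Set.BijOn ψ H H ∧
    IsOrderOf ψ (p * orderOf a) ∧
    (∀ P ∈ Ω, (fnOrbit ψ P).ncard = p) ∧
    {O : Set (F × F) | ∃ P ∈ Ω, O = fnOrbit ψ P}.ncard = q / p ∧
    ∀ P ∈ H, P.1 ≠ 0 → (fnOrbit ψ P).ncard = p * orderOf a := by
  classical
  have hp2 := hp.two_le
  have hq1 : 1 < q := by rw [hq]; exact Nat.one_lt_pow (by omega) hp.one_lt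
  haveI hFact : Fact p.Prime := ⟨hp⟩
  -- characteristic
  haveI hchar : CharP F p := by
    have h1 : CharP F (ringChar F) := ringChar.charP F
    have hcast : ((Fintype.card F : ℕ) : F) = 0 := FiniteField.cast_card_eq_zero F
    have hdvd : ringChar F ∣ q ^ 2 := by
      rw [← hF]
      exact (CharP.cast_eq_zero_iff F (ringChar F) _).mp hcast
    have hrp : (ringChar F).Prime := by
      have := CharP.char_is_prime F (ringChar F)
      exact this
    have : ringChar F = p := by
      have : ringChar F ∣ p := by
        rw [hq, ← pow_mul] at hdvd
        exact hrp.dvd_of_dvd_pow hdvd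
      exact ((Nat.prime_dvd_prime_iff_eq hrp hp).mp this)
    rw [← this]; exact h1
  have frob : ∀ x y : F, (x + y) ^ q = x ^ q + y ^ q := by
    intro x y; rw [hq]; exact add_pow_char_pow ..
  -- iterate formula
  have hiter : ∀ (k : ℕ) (P : F × F), ψ^[k] P = (a ^ k * P.1, P.2 + k • c) := by
    intro k
    induction k with
    | zero => intro P; simp
    | succ k ih =>
      intro P
      rw [Function.iterate_succ_apply', ih, hψ]
      simp only [pow_succ, succ_nsmul]
      exact Prod.ext (by ring) (by ring)
  have hsmul0 : ∀ k : ℕ, (k • c = 0 ↔ p ∣ k) := by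
    intro k
    rw [nsmul_eq_mul, mul_eq_zero]
    simp only [hc0, or_false]
    exact CharP.cast_eq_zero_iff F p k
  have hak : ∀ k : ℕ, (a ^ k = 1 ↔ orderOf a ∣ k) := fun k =>
    ⟨orderOf_dvd_of_pow_eq_one, fun h => orderOf_dvd_iff_pow_eq_one.mp h⟩
  have hordq : orderOf a ∣ q + 1 := orderOf_dvd_of_pow_eq_one haq
  have hord0 : 0 < orderOf a := by
    rcases Nat.eq_zero_or_pos (orderOf a) with h | h
    · exfalso
      have : (0:ℕ) ∣ q + 1 := h ▸ hordq
      omega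
    · exact h
  have hpord : ¬ p ∣ orderOf a := by
    intro hdvd
    have h1 : p ∣ q + 1 := hdvd.trans hordq
    have h2 : p ∣ q := by rw [hq]; exact dvd_pow_self p (by omega)
    have := Nat.dvd_sub h1 h2
    simp at this
    omega
  have hcop : Nat.Coprime p (orderOf a) := (Nat.Prime.coprime_iff_not_dvd hp).mpr hpord
  set N := p * orderOf a with hNdef
  have hN0 : 0 < N := Nat.mul_pos (by omega) hord0
  have haN : a ^ N = 1 := by
    rw [hNdef, Nat.mul_comm, pow_mul, pow_orderOf_eq_one, one_pow]
  have hψN : ψ^[N] = id := by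
    funext P
    rw [hiter, haN, (hsmul0 N).mpr ⟨orderOf a, rfl⟩]
    simp
  have hinj : Function.Injective ψ := by
    rw [hψ]
    intro P Q h
    simp only [Prod.mk.injEq] at h
    exact Prod.ext (mul_left_cancel₀ ha0 h.1) (add_right_cancel h.2)
  -- membership iterate conditions
  have hfix : ∀ (P : F × F) (k : ℕ), ψ^[k] P = P ↔ (a ^ k * P.1 = P.1 ∧ k • c = 0) := by
    intro P k
    rw [hiter, Prod.ext_iff]
    simp only [add_eq_left]
  -- Ω card
  have hKcard : {y : F | y ^ q + y = 0}.ncard = q := ker_card q hq1 hF frob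
  have hΩim : Ω = (fun y => ((0:F), y)) '' {y : F | y ^ q + y = 0} := by
    rw [hΩ]
    ext P
    simp only [Set.mem_setOf_eq, Set.mem_image]
    constructor
    · rintro ⟨h1, h2⟩
      exact ⟨P.2, h2, by rw [← h1]⟩
    · rintro ⟨y, hy, rfl⟩
      exact ⟨rfl, hy⟩
  have hΩcard : Ω.ncard = q := by
    rw [hΩim, Set.ncard_image_of_injective _ (fun y y' h => by simpa using h), hKcard]
  -- orbit of Ω points
  have hΩfix : ∀ P ∈ Ω, ∀ k : ℕ, (ψ^[k] P = P ↔ p ∣ k) := by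
    intro P hP k
    rw [hΩ] at hP
    rw [hfix, hP.1]
    simp only [mul_zero, true_and]
    exact hsmul0 k
  have horbΩ : ∀ P ∈ Ω, (fnOrbit ψ P).ncard = p :=
    fun P hP => fnOrbit_ncard ψ hinj N p hN0 hψN P (by omega) (hΩfix P hP)
  -- BijOn
  have hmaps : ∀ P ∈ H, ψ P ∈ H := by
    intro P hP
    rw [hH] at hP ⊢
    rw [hψ]
    simp only [Set.mem_setOf_eq] at hP ⊢
    rw [frob, mul_pow, haq, one_mul]
    calc P.2 ^ q + c ^ q + (P.2 + c) = (P.2 ^ q + P.2) + (c ^ q + c) := by ring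
      _ = P.1 ^ (q + 1) := by rw [hP, hc, add_zero]
  have hmaps_iter : ∀ (k : ℕ), ∀ P ∈ H, ψ^[k] P ∈ H := by
    intro k
    induction k with
    | zero => intro P hP; simpa using hP
    | succ k ih =>
      intro P hP
      rw [Function.iterate_succ_apply']
      exact hmaps _ (ih P hP)
  have hbij : Set.BijOn ψ H H := by
    refine ⟨fun P hP => hmaps P hP, hinj.injOn, ?_⟩
    intro P hP
    refine ⟨ψ^[N - 1] P, hmaps_iter (N - 1) P hP, ?_⟩
    have : ψ (ψ^[N-1] P) = ψ^[N] P := by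
      rw [← Function.iterate_succ_apply' ψ (N-1) P]
      congr 1
      omega
    rw [this, hψN, id]
  -- order
  have horder : IsOrderOf ψ N := by
    refine ⟨hψN, fun k hk hkid => ?_⟩
    have h1 : ψ^[k] (1, 0) = (1, 0) := by rw [hkid]; rfl
    rw [hfix] at h1
    obtain ⟨ha1', hc1⟩ := h1
    rw [mul_one] at ha1'
    have hd1 : orderOf a ∣ k := (hak k).mp ha1'
    have hd2 : p ∣ k := (hsmul0 k).mp hc1
    exact Nat.le_of_dvd hk (hcop.mul_dvd_of_dvd_of_dvd hd2 hd1)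
  -- orbits of x ≠ 0 points
  have horbH : ∀ P : F × F, P.1 ≠ 0 → (fnOrbit ψ P).ncard = N := by
    intro P hP1
    refine fnOrbit_ncard ψ hinj N N hN0 hψN P hN0 ?_
    intro k
    rw [hfix]
    constructor
    · rintro ⟨h1, h2⟩
      have ha' : a ^ k = 1 := by
        have := mul_right_cancel₀ hP1 (h1.trans (one_mul P.1).symm)
        exact this
      exact hcop.mul_dvd_of_dvd_of_dvd ((hsmul0 k).mp h2) ((hak k).mp ha')
    · intro hdvd
      constructor
      · rw [(hak k).mpr ((Dvd.intro_left p rfl).trans hdvd), one_mul]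
      · exact (hsmul0 k).mpr ((Dvd.intro (orderOf a) rfl).trans hdvd)
  -- number of short orbits
  have hΩmap : ∀ P ∈ Ω, ψ P ∈ Ω := by
    intro P hP
    rw [hΩ] at hP ⊢
    rw [hψ]
    refine ⟨by simp [hP.1], ?_⟩
    simp only
    rw [frob]
    calc P.2 ^ q + c ^ q + (P.2 + c) = (P.2 ^ q + P.2) + (c ^ q + c) := by ring
      _ = 0 := by rw [hP.2, hc]; ring
  have hΩmap_iter : ∀ (k : ℕ), ∀ P ∈ Ω, ψ^[k] P ∈ Ω := by
    intro k
    induction k with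
    | zero => intro P hP; simpa using hP
    | succ k ih =>
      intro P hP
      rw [Function.iterate_succ_apply']
      exact hΩmap _ (ih P hP)
  have horbsub : ∀ P ∈ Ω, fnOrbit ψ P ⊆ Ω := by
    intro P hP
    rw [fnOrbit_eq_image ψ N p hN0 hψN P (by omega) (hΩfix P hP)]
    rintro Q ⟨m, _, rfl⟩
    exact hΩmap_iter m P hP
  have hcount : {O : Set (F × F) | ∃ P ∈ Ω, O = fnOrbit ψ P}.ncard = q / p := by
    set 𝒪 : Set (Set (F × F)) := {O | ∃ P ∈ Ω, O = fnOrbit ψ P} with h𝒪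
    have h𝒪fin : 𝒪.Finite := Set.toFinite _
    set 𝒪f := h𝒪fin.toFinset with h𝒪f
    set t : Set (F × F) → Finset (F × F) := fun O => (Set.toFinite O).toFinset with ht
    have hbU : 𝒪f.biUnion t = (Set.toFinite Ω).toFinset := by
      ext P
      simp only [Finset.mem_biUnion, Set.Finite.mem_toFinset, h𝒪f, ht]
      constructor
      · rintro ⟨O, hO, hPO⟩
        obtain ⟨P', hP', rfl⟩ := hO
        exact horbsub P' hP' hPO
      · intro hP
        exact ⟨fnOrbit ψ P, ⟨P, hP, rfl⟩, mem_fnOrbit_self ψ P⟩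
    have hdisj : ∀ O1 ∈ 𝒪f, ∀ O2 ∈ 𝒪f, O1 ≠ O2 → Disjoint (t O1) (t O2) := by
      intro O1 hO1 O2 hO2 hne
      rw [Finset.disjoint_left]
      intro Q hQ1 hQ2
      rw [ht] at hQ1 hQ2
      simp only [Set.Finite.mem_toFinset] at hQ1 hQ2
      rw [h𝒪f, Set.Finite.mem_toFinset] at hO1 hO2
      obtain ⟨P1, _, rfl⟩ := hO1
      obtain ⟨P2, _, rfl⟩ := hO2
      exact hne ((fnOrbit_eq_of_mem ψ hQ1).symm.trans (fnOrbit_eq_of_mem ψ hQ2))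
    have hsum := Finset.card_biUnion hdisj
    rw [hbU] at hsum
    have hcards : ∀ O ∈ 𝒪f, (t O).card = p := by
      intro O hO
      rw [h𝒪f, Set.Finite.mem_toFinset] at hO
      obtain ⟨P, hP, rfl⟩ := hO
      rw [ht, ← Set.ncard_eq_toFinset_card _ (Set.toFinite _)]
      exact horbΩ P hP
    rw [Finset.sum_congr rfl hcards, Finset.sum_const, smul_eq_mul] at hsum
    have hΩq : (Set.toFinite Ω).toFinset.card = q := by
      rw [← Set.ncard_eq_toFinset_card _ (Set.toFinite _)]
      exact hΩcard
    have h𝒪card : 𝒪.ncard = 𝒪f.card :=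
      Set.ncard_eq_toFinset_card _ h𝒪fin
    rw [h𝒪card, ← hΩq, hsum, Nat.mul_div_cancel _ (by omega : 0 < p)]
  exact ⟨hΩcard, hbij, horder, horbΩ, hcount, fun P _ hP1 => horbH P hP1⟩
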